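/- arXiv:0912.0888 — 2 statements merged into one kernel-verified Lean document; each statement's English description precedes it below -/
import Mathlib

section
/- Let Ψ(λ) = ∫₀^a |e^{2πiλt} - 1|² t^{-1-2s} dt for fixed a > 0 and s ∈ (0,1). Then there exist constants c₁, c₂ > 0 (depending on a, s) such that Ψ(λ) ≤ c₂ |λ|^{2s} for all λ ∈ ℝ, and Ψ(λ) ≥ c₁ |λ|^{2s} whenever |λ| ≥ 1/a. -/
open Real MeasureTheory Set

lemma aux_abs_sq (x : ℝ) :
    ‖Complex.exp ((x:ℂ) * Complex.I) - 1‖ ^ 2 = 4 * Real.sin (x/2) ^ 2 := by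
  rw [Complex.sq_norm, Complex.normSq_apply]
  simp only [Complex.sub_re, Complex.sub_im, Complex.exp_ofReal_mul_I_re,
    Complex.exp_ofReal_mul_I_im, Complex.one_re, Complex.one_im]
  have h1 := Real.sin_sq_add_cos_sq x
  have h2 := Real.cos_two_mul (x/2)
  have h3 := Real.sin_sq_add_cos_sq (x/2)
  rw [show 2*(x/2) = x by ring] at h2
  nlinarith

lemma aux_key (L t s : ℝ) :
    ‖Complex.exp (((2*Real.pi*L*t : ℝ) : ℂ) * Complex.I) - 1‖ ^ 2
      * t ^ (-(1:ℝ) - 2*s)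
    = 4 * Real.sin (Real.pi*L*t) ^ 2 * t ^ (-(1:ℝ) - 2*s) := by
  rw [aux_abs_sq, show 2*Real.pi*L*t/2 = Real.pi*L*t by ring]

lemma aux_meas (s L : ℝ) :
    Measurable (fun t : ℝ => 4 * Real.sin (Real.pi*L*t)^2 * t ^ (-(1:ℝ) - 2*s)) := by
  fun_prop

lemma aux_int (s L c : ℝ) (hs : 0 < s) (hs1 : s < 1) :
    IntegrableOn (fun t : ℝ => 4 * Real.sin (Real.pi*L*t)^2 * t ^ (-(1:ℝ) - 2*s))
      (Set.Ioc 0 c) := by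
  have hg : IntegrableOn (fun t : ℝ => 4*(Real.pi*L)^2 * t ^ (1-2*s)) (Set.Ioc 0 c) :=
    ((intervalIntegral.intervalIntegrable_rpow' (by linarith)).1).const_mul _
  refine MeasureTheory.Integrable.mono hg (aux_meas s L).aestronglyMeasurable ?_
  rw [MeasureTheory.ae_restrict_iff' measurableSet_Ioc]
  filter_upwards with t ht
  have ht0 : 0 < t := ht.1
  have h1 : t ^ ((1:ℝ)-2*s) = t^2 * t ^ (-(1:ℝ)-2*s) := by
    rw [← Real.rpow_natCast t 2, ← Real.rpow_add ht0]; congr 1; ring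
  have h2 : Real.sin (Real.pi*L*t)^2 ≤ (Real.pi*L*t)^2 := Real.sin_sq_le_sq
  have h3 : (0:ℝ) ≤ t ^ (-(1:ℝ)-2*s) := Real.rpow_nonneg ht0.le _
  have h4 : (0:ℝ) ≤ t ^ ((1:ℝ)-2*s) := Real.rpow_nonneg ht0.le _
  rw [Real.norm_eq_abs, Real.norm_eq_abs, abs_of_nonneg (by positivity),
    abs_of_nonneg (by positivity)]
  nlinarith [sq_nonneg (Real.pi*L)]

/-- upper bound for the model integral on `Ioc 0 c`. -/
lemma aux_upper1 (s L c : ℝ) (hs : 0 < s) (hs1 : s < 1) (hc : 0 < c) :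
    (∫ t in Set.Ioc (0:ℝ) c, 4 * Real.sin (Real.pi*L*t)^2 * t ^ (-(1:ℝ) - 2*s))
      ≤ 4*(Real.pi*L)^2 * c ^ (2-2*s) / (2-2*s) := by
  have hmono : (∫ t in Set.Ioc (0:ℝ) c, 4 * Real.sin (Real.pi*L*t)^2 * t ^ (-(1:ℝ) - 2*s))
      ≤ ∫ t in Set.Ioc (0:ℝ) c, 4*(Real.pi*L)^2 * t ^ (1-2*s) := by
    refine setIntegral_mono_on (aux_int s L c hs hs1)
      (((intervalIntegral.intervalIntegrable_rpow' (by linarith)).1).const_mul _)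
      measurableSet_Ioc ?_
    intro t ht
    have ht0 : 0 < t := ht.1
    have h1 : t ^ ((1:ℝ)-2*s) = t^2 * t ^ (-(1:ℝ)-2*s) := by
      rw [← Real.rpow_natCast t 2, ← Real.rpow_add ht0]; congr 1; ring
    have h2 : Real.sin (Real.pi*L*t)^2 ≤ (Real.pi*L*t)^2 := Real.sin_sq_le_sq
    have h3 : (0:ℝ) ≤ t ^ (-(1:ℝ)-2*s) := Real.rpow_nonneg ht0.le _
    nlinarith [sq_nonneg (Real.pi*L)]
  refine hmono.trans ?_
  rw [← intervalIntegral.integral_of_le hc.le, intervalIntegral.integral_const_mul,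
    integral_rpow (Or.inl (by linarith)), Real.zero_rpow (by norm_num; linarith)]
  rw [show (1:ℝ)-2*s+1 = 2-2*s by ring]
  ring_nf
  exact le_refl _

set_option maxHeartbeats 1000000 in
/-- Two-sided asymptotics for `Ψ(λ) = ∫₀^a |e^{2πiλt} - 1|² t^{-1-2s} dt`:
`Ψ(λ) ≤ c₂|λ|^{2s}` for all `λ`, and `Ψ(λ) ≥ c₁|λ|^{2s}` when `|λ| ≥ 1/a`. -/
theorem stmt_8 (a s : ℝ) (ha : 0 < a) (hs : 0 < s) (hs1 : s < 1) :
    ∃ c₁ > 0, ∃ c₂ > 0,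
      (∀ L : ℝ,
        (∫ t in Set.Ioc (0:ℝ) a,
            ‖Complex.exp (((2*Real.pi*L*t : ℝ) : ℂ) * Complex.I) - 1‖ ^ 2
              * t ^ (-(1:ℝ) - 2*s))
          ≤ c₂ * |L| ^ (2*s)) ∧
      (∀ L : ℝ, 1/a ≤ |L| →
        c₁ * |L| ^ (2*s)
          ≤ ∫ t in Set.Ioc (0:ℝ) a,
              ‖Complex.exp (((2*Real.pi*L*t : ℝ) : ℂ) * Complex.I) - 1‖ ^ 2
                * t ^ (-(1:ℝ) - 2*s)) := by
  have h2s : (0:ℝ) < 2 - 2*s := by linarith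
  refine ⟨1, one_pos, 4*Real.pi^2/(2-2*s) + 2/s, by positivity, ?_, ?_⟩
  · -- upper bound
    intro L
    simp only [aux_key]
    rcases eq_or_ne L 0 with rfl | hL0
    · simp [Real.zero_rpow (by positivity : 2*s ≠ 0)]
    have hLpos : 0 < |L| := abs_pos.mpr hL0
    have hL2 : |L| ^ (2*s) * |L| ^ (2-2*s) = L^2 := by
      rw [← Real.rpow_add hLpos, show 2*s + (2-2*s) = (2:ℝ) by ring,
        show ((2:ℝ) = ((2:ℕ):ℝ)) by norm_num, Real.rpow_natCast, sq_abs]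
    have hc2 : 4*Real.pi^2/(2-2*s) * |L| ^ (2*s) + 2/s * |L| ^ (2*s)
        = (4*Real.pi^2/(2-2*s) + 2/s) * |L| ^ (2*s) := by ring
    rcases le_or_gt (|L| * a) 1 with h1 | h1
    · -- small frequency
      refine (aux_upper1 s L a hs hs1 ha).trans ?_
      have key : L^2 * a ^ (2-2*s) ≤ |L| ^ (2*s) := by
        have e1 : |L| ^ (2-2*s) * a ^ (2-2*s) = (|L| * a) ^ (2-2*s) :=
          (Real.mul_rpow (abs_nonneg L) ha.le).symm
        have e2 : (|L| * a) ^ (2-2*s) ≤ 1 :=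
          Real.rpow_le_one (by positivity) h1 (by linarith)
        calc L^2 * a ^ (2-2*s) = |L| ^ (2*s) * ((|L| * a) ^ (2-2*s)) := by
              rw [← e1, ← hL2]; ring
          _ ≤ |L| ^ (2*s) * 1 := by
              exact mul_le_mul_of_nonneg_left e2 (Real.rpow_nonneg (abs_nonneg L) _)
          _ = |L| ^ (2*s) := mul_one _
      have h2 : (0:ℝ) ≤ 2/s * |L| ^ (2*s) := by positivity
      rw [← hc2]
      have : 4*(Real.pi*L)^2 * a ^ (2-2*s) / (2-2*s)
          ≤ 4*Real.pi^2/(2-2*s) * |L| ^ (2*s) := by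
        rw [div_le_iff₀ h2s]
        calc 4*(Real.pi*L)^2 * a ^ (2-2*s)
            = 4*Real.pi^2 * (L^2 * a ^ (2-2*s)) := by ring
          _ ≤ 4*Real.pi^2 * |L| ^ (2*s) := by
              exact mul_le_mul_of_nonneg_left key (by positivity)
          _ = 4*Real.pi^2/(2-2*s) * |L| ^ (2*s) * (2-2*s) := by
              field_simp [show (1:ℝ) - s ≠ 0 by linarith]
      linarith
    · -- large frequency
      set b : ℝ := |L|⁻¹ with hbdef
      have hb : 0 < b := by positivity
      have hba : b ≤ a := by
        rw [hbdef, inv_le_comm₀ hLpos ha] at *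
        rw [← one_div]
        exact (div_le_iff₀ ha).mpr (by linarith [mul_comm |L| a])
      have hsplit : Set.Ioc (0:ℝ) a = Set.Ioc 0 b ∪ Set.Ioc b a :=
        (Set.Ioc_union_Ioc_eq_Ioc hb.le hba).symm
      rw [hsplit, setIntegral_union (Set.Ioc_disjoint_Ioc_of_le le_rfl) measurableSet_Ioc
        (aux_int s L b hs hs1) ((aux_int s L a hs hs1).mono_set
          (Set.Ioc_subset_Ioc_left hb.le))]
      have hbpow : b ^ (2-2*s) = (|L| ^ (2-2*s))⁻¹ := Real.inv_rpow (abs_nonneg L) _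
      have hLr : (0:ℝ) < |L| ^ (2-2*s) := Real.rpow_pos_of_pos hLpos _
      have keyb : L^2 * b ^ (2-2*s) = |L| ^ (2*s) := by
        rw [hbpow, ← hL2]
        exact mul_inv_cancel_right₀ hLr.ne' _
      have piece1 : (∫ t in Set.Ioc (0:ℝ) b, 4 * Real.sin (Real.pi*L*t)^2 * t ^ (-(1:ℝ) - 2*s))
          ≤ 4*Real.pi^2/(2-2*s) * |L| ^ (2*s) := by
        refine (aux_upper1 s L b hs hs1 hb).trans ?_
        rw [div_le_iff₀ h2s]
        refine le_of_eq ?_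
        calc 4*(Real.pi*L)^2 * b ^ (2-2*s) = 4*Real.pi^2 * (L^2 * b ^ (2-2*s)) := by ring
          _ = 4*Real.pi^2 * |L| ^ (2*s) := by rw [keyb]
          _ = 4*Real.pi^2/(2-2*s) * |L| ^ (2*s) * (2-2*s) := by field_simp [show (1:ℝ) - s ≠ 0 by linarith]
      have e2 : b ^ (-(2*s)) = |L| ^ (2*s) := by
        rw [hbdef, ← Real.rpow_neg_one |L|, ← Real.rpow_mul (abs_nonneg L)]
        norm_num
      have h0uIcc : (0:ℝ) ∉ Set.uIcc b a := Set.notMem_uIcc_of_lt hb ha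
      have piece2 : (∫ t in Set.Ioc b a, 4 * Real.sin (Real.pi*L*t)^2 * t ^ (-(1:ℝ) - 2*s))
          ≤ 2/s * |L| ^ (2*s) := by
        have hmono : (∫ t in Set.Ioc b a, 4 * Real.sin (Real.pi*L*t)^2 * t ^ (-(1:ℝ) - 2*s))
            ≤ ∫ t in Set.Ioc b a, 4 * t ^ (-(1:ℝ) - 2*s) := by
          refine setIntegral_mono_on
            ((aux_int s L a hs hs1).mono_set (Set.Ioc_subset_Ioc_left hb.le))
            (((intervalIntegral.intervalIntegrable_rpow (Or.inr h0uIcc)).1).const_mul 4)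
            measurableSet_Ioc ?_
          intro t ht
          have ht0 : 0 < t := lt_trans hb ht.1
          have h2 : Real.sin (Real.pi*L*t)^2 ≤ 1 := Real.sin_sq_le_one _
          have h3 : (0:ℝ) ≤ t ^ (-(1:ℝ)-2*s) := Real.rpow_nonneg ht0.le _
          nlinarith
        refine hmono.trans ?_
        rw [← intervalIntegral.integral_of_le hba, intervalIntegral.integral_const_mul,
          integral_rpow (Or.inr ⟨by intro h; apply hs.ne'; linarith [neg_add_cancel (1:ℝ)],
            h0uIcc⟩),
          show (-(1:ℝ)-2*s+1) = -(2*s) by ring, e2]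
        have hA : (0:ℝ) ≤ a ^ (-(2*s)) := Real.rpow_nonneg ha.le _
        have hP : (0:ℝ) ≤ |L| ^ (2*s) := Real.rpow_nonneg (abs_nonneg L) _
        have h4 : 4 * ((a ^ (-(2*s)) - |L| ^ (2*s)) / -(2*s))
            = 2 * (|L| ^ (2*s) - a ^ (-(2*s))) / s := by
          field_simp
          ring
        rw [h4, div_le_iff₀ hs]
        have h5 : 2/s * |L| ^ (2*s) * s = 2 * |L| ^ (2*s) := by field_simp
        linarith
      rw [← hc2]
      exact add_le_add piece1 piece2
  · -- lower bound
    intro L hL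
    simp only [aux_key]
    have hLpos : 0 < |L| := lt_of_lt_of_le (by positivity) hL
    have h1a : 1 ≤ |L| * a := by
      have := (div_le_iff₀ ha).mp hL
      nlinarith
    set u : ℝ := (4*|L|)⁻¹ with hudef
    set v : ℝ := (2*|L|)⁻¹ with hvdef
    have hu : 0 < u := by positivity
    have hv : 0 < v := by positivity
    have huv : u < v := by
      rw [hudef, hvdef]
      exact inv_strictAnti₀ (by positivity) (by linarith)
    have hinva : |L|⁻¹ ≤ a := by
      rw [← one_div]
      exact (div_le_iff₀ hLpos).mpr (by nlinarith)
    have hva : v ≤ a := by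
      have hinv0 : (0:ℝ) ≤ |L|⁻¹ := by positivity
      have : v = |L|⁻¹/2 := by rw [hvdef, mul_inv]; ring
      rw [this]; linarith
    have hsub : Set.Ioc u v ⊆ Set.Ioc (0:ℝ) a := Set.Ioc_subset_Ioc hu.le hva
    have stepB : (∫ t in Set.Ioc u v, 4 * Real.sin (Real.pi*L*t)^2 * t ^ (-(1:ℝ) - 2*s))
        ≤ ∫ t in Set.Ioc (0:ℝ) a, 4 * Real.sin (Real.pi*L*t)^2 * t ^ (-(1:ℝ) - 2*s) := by
      refine setIntegral_mono_set (aux_int s L a hs hs1) ?_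
        (HasSubset.Subset.eventuallyLE hsub)
      rw [Filter.EventuallyLE, MeasureTheory.ae_restrict_iff' measurableSet_Ioc]
      filter_upwards with t ht
      simp only [Pi.zero_apply]
      have h := Real.rpow_nonneg ht.1.le (-(1:ℝ) - 2*s)
      positivity
    have stepA : (∫ _t in Set.Ioc u v, 2 * v ^ (-(1:ℝ) - 2*s))
        ≤ ∫ t in Set.Ioc u v, 4 * Real.sin (Real.pi*L*t)^2 * t ^ (-(1:ℝ) - 2*s) := by
      refine setIntegral_mono_on (integrableOn_const measure_Ioc_lt_top.ne)
        ((aux_int s L a hs hs1).mono_set hsub) measurableSet_Ioc ?_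
      intro t ht
      have ht0 : 0 < t := hu.trans ht.1
      have hsin : Real.sin (Real.pi*L*t)^2 = Real.sin (Real.pi * |L| * t)^2 := by
        rcases abs_cases L with ⟨h,_⟩|⟨h,_⟩
        · rw [h]
        · rw [h, show Real.pi * -L * t = -(Real.pi*L*t) by ring, Real.sin_neg, neg_sq]
      have eu : |L| * u = 4⁻¹ := by rw [hudef]; field_simp
      have ev : |L| * v = 2⁻¹ := by rw [hvdef]; field_simp
      have hlt1 : (4:ℝ)⁻¹ < |L| * t := by
        rw [← eu]; exact mul_lt_mul_of_pos_left ht.1 hLpos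
      have hlt2 : |L| * t ≤ 2⁻¹ := by
        rw [← ev]; exact mul_le_mul_of_nonneg_left ht.2 (abs_nonneg L)
      have hx_lb : Real.pi/4 ≤ Real.pi * |L| * t := by
        have := Real.pi_pos; nlinarith
      have hx_ub : Real.pi * |L| * t ≤ Real.pi/2 := by
        have := Real.pi_pos; nlinarith
      have hsin_lb : Real.sqrt 2 / 2 ≤ Real.sin (Real.pi * |L| * t) := by
        rw [← Real.sin_pi_div_four]
        have hpi := Real.pi_pos
        exact Real.strictMonoOn_sin.monotoneOn
          ⟨by linarith, by linarith⟩ ⟨by linarith, by linarith⟩ hx_lb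
      have hs2 : (1:ℝ)/2 ≤ Real.sin (Real.pi * |L| * t)^2 := by
        nlinarith [Real.sq_sqrt (by norm_num : (0:ℝ) ≤ 2), Real.sqrt_nonneg 2]
      have h40 : (2:ℝ) ≤ 4 * Real.sin (Real.pi*L*t)^2 := by rw [hsin]; linarith
      have hrpow : v ^ (-(1:ℝ) - 2*s) ≤ t ^ (-(1:ℝ) - 2*s) :=
        Real.rpow_le_rpow_of_nonpos ht0 ht.2 (by linarith)
      exact mul_le_mul h40 hrpow (Real.rpow_nonneg hv.le _) (by positivity)
    rw [setIntegral_const, Real.volume_real_Ioc, max_eq_left (by linarith),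
      smul_eq_mul] at stepA
    have hvu : v - u = v/2 := by
      rw [hudef, hvdef]
      have hL0 : |L| ≠ 0 := hLpos.ne'
      field_simp
      ring
    have hvr : (v/2) * (2 * v ^ (-(1:ℝ) - 2*s)) = v ^ (-(2*s)) := by
      calc (v/2) * (2 * v ^ (-(1:ℝ) - 2*s)) = v ^ (1:ℝ) * v ^ (-(1:ℝ) - 2*s) := by
            rw [Real.rpow_one]; ring
        _ = v ^ (-(2*s)) := by rw [← Real.rpow_add hv]; congr 1; ring
    have hvfin : v ^ (-(2*s)) = (2*|L|) ^ (2*s) := by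
      rw [hvdef, ← Real.rpow_neg_one (2*|L|), ← Real.rpow_mul (by positivity)]
      congr 1; ring
    have h2pow : |L| ^ (2*s) ≤ (2*|L|) ^ (2*s) :=
      Real.rpow_le_rpow (abs_nonneg L) (by linarith) (by positivity)
    calc 1 * |L| ^ (2*s) = |L| ^ (2*s) := one_mul _
      _ ≤ (2*|L|) ^ (2*s) := h2pow
      _ = v ^ (-(2*s)) := hvfin.symm
      _ = (v/2) * (2 * v ^ (-(1:ℝ) - 2*s)) := hvr.symm
      _ = (v - u) * (2 * v ^ (-(1:ℝ) - 2*s)) := by rw [hvu]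
      _ ≤ ∫ t in Set.Ioc u v, 4 * Real.sin (Real.pi*L*t)^2 * t ^ (-(1:ℝ) - 2*s) := stepA
      _ ≤ ∫ t in Set.Ioc (0:ℝ) a, 4 * Real.sin (Real.pi*L*t)^2 * t ^ (-(1:ℝ) - 2*s) := stepB
end

section
/- Let N ≥ 2 and suppose a Hilbert space norm decomposition: let (f^n) be a sequence in a Hilbert space H with norms bounded by 1, converging weakly to f⁰, and suppose that for each R > 1 the norms split as |f^n - f⁰|²_{L²} ≲ Σ_{|v_i| ≤ R} ⟨v_i⟩⁻¹|f^n_i - f⁰_i|²_{L²} + R^{-ρ} |f^n - f⁰|²_H with ρ > 0, where for each fixed i the localized pieces f^n_i converge in L² to f⁰_i. Then f^n → f⁰ strongly in L². (Compact embedding of N^{s,γ} into L² via localization.) -/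
open Filter

/-- Abstract compactness lemma underlying the compact embedding `N^{s,γ} ↪ L²`:
a sequence bounded by 1 in the Hilbert space `H` which converges weakly, whose
localized pieces converge in `L²`, and which satisfies the weighted localization
splitting of the `L²` norm with tail weight `R^{-ρ}`, converges strongly in `L²`. -/
theorem stmt_19 {H : Type*} [NormedAddCommGroup H] [InnerProductSpace ℝ H]
    (N : ℕ) (hN : 2 ≤ N)
    (n2 : H → ℝ) (hn2 : ∀ x, 0 ≤ n2 x)
    (f : ℕ → H) (f0 : H)
    (hb : ∀ n, ‖f n‖ ≤ 1)
    (hweak : ∀ φ : H →L[ℝ] ℝ, Tendsto (fun n => φ (f n)) atTop (nhds (φ f0)))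
    (v : ℕ → ℝ) (a : ℕ → ℕ → ℝ)
    (hfin : ∀ R : ℝ, {i : ℕ | |v i| ≤ R}.Finite)
    (ha : ∀ i n, 0 ≤ a i n)
    (haconv : ∀ i, Tendsto (fun n => a i n) atTop (nhds 0))
    (ρ : ℝ) (hρ : 0 < ρ) (K : ℝ)
    (hsplit : ∀ R : ℝ, 1 < R → ∀ n,
      (n2 (f n - f0))^2
        ≤ K * ((∑ i ∈ (hfin R).toFinset, (Real.sqrt (1 + |v i|^2))⁻¹ * a i n)
            + R ^ (-ρ) * ‖f n - f0‖^2)) :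
    Tendsto (fun n => n2 (f n - f0)) atTop (nhds 0) := by
  -- uniform bound on ‖f n - f0‖²
  set C : ℝ := 1 + ‖f0‖ with hCdef
  have hC0 : 0 ≤ C := by positivity
  have hC : ∀ n, ‖f n - f0‖ ^ 2 ≤ C ^ 2 := by
    intro n
    have h1 : ‖f n - f0‖ ≤ C := by
      calc ‖f n - f0‖ ≤ ‖f n‖ + ‖f0‖ := norm_sub_le _ _
        _ ≤ 1 + ‖f0‖ := by linarith [hb n]
    exact pow_le_pow_left₀ (norm_nonneg _) h1 2
  rw [Metric.tendsto_atTop]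
  intro ε hε
  set K' := |K| with hK'
  have hK0 : 0 ≤ K' := abs_nonneg K
  -- choose R
  have hrn : Tendsto (fun R : ℝ => K' * (R ^ (-ρ) * C ^ 2)) atTop (nhds 0) := by
    have := tendsto_rpow_neg_atTop hρ
    have h2 := (this.mul_const (C ^ 2)).const_mul K'
    simpa using h2
  have hR : ∃ R : ℝ, 1 < R ∧ K' * (R ^ (-ρ) * C ^ 2) < ε ^ 2 / 2 := by
    have := (hrn.eventually (gt_mem_nhds (by positivity : (0:ℝ) < ε ^ 2 / 2)))
    rcases (this.and (eventually_gt_atTop 1)).exists with ⟨R, h1, h2⟩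
    exact ⟨R, h2, h1⟩
  obtain ⟨R, hR1, hRsmall⟩ := hR
  -- finite sum tends to 0
  have hsum : Tendsto (fun n => K' * ∑ i ∈ (hfin R).toFinset,
      (Real.sqrt (1 + |v i|^2))⁻¹ * a i n) atTop (nhds 0) := by
    have hs : Tendsto (fun n => ∑ i ∈ (hfin R).toFinset,
        (Real.sqrt (1 + |v i|^2))⁻¹ * a i n) atTop (nhds 0) := by
      have : Tendsto (fun n => ∑ i ∈ (hfin R).toFinset,
          (Real.sqrt (1 + |v i|^2))⁻¹ * a i n) atTop
          (nhds (∑ i ∈ (hfin R).toFinset, (Real.sqrt (1 + |v i|^2))⁻¹ * 0)) :=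
        tendsto_finset_sum _ (fun i _ => (haconv i).const_mul _)
      simpa using this
    simpa using hs.const_mul K'
  have hev := hsum.eventually (gt_mem_nhds (by positivity : (0:ℝ) < ε ^ 2 / 2))
  rw [eventually_atTop] at hev
  obtain ⟨M, hM⟩ := hev
  refine ⟨M, fun n hn => ?_⟩
  have key : (n2 (f n - f0)) ^ 2 < ε ^ 2 := by
    have h1 := hsplit R hR1 n
    have hSnn : 0 ≤ ∑ i ∈ (hfin R).toFinset, (Real.sqrt (1 + |v i|^2))⁻¹ * a i n := by
      apply Finset.sum_nonneg
      intro i _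
      exact mul_nonneg (inv_nonneg.mpr (Real.sqrt_nonneg _)) (ha i n)
    have hRρ : 0 ≤ R ^ (-ρ) := Real.rpow_nonneg (by linarith) _
    have h2 : (n2 (f n - f0)) ^ 2
        ≤ K' * (∑ i ∈ (hfin R).toFinset, (Real.sqrt (1 + |v i|^2))⁻¹ * a i n)
          + K' * (R ^ (-ρ) * C ^ 2) := by
      have hKK : K ≤ K' := le_abs_self K
      have hterm : R ^ (-ρ) * ‖f n - f0‖ ^ 2 ≤ R ^ (-ρ) * C ^ 2 :=
        mul_le_mul_of_nonneg_left (hC n) hRρ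
      have hnn : 0 ≤ (∑ i ∈ (hfin R).toFinset, (Real.sqrt (1 + |v i|^2))⁻¹ * a i n)
          + R ^ (-ρ) * ‖f n - f0‖ ^ 2 := by positivity
      calc (n2 (f n - f0)) ^ 2
          ≤ K * ((∑ i ∈ (hfin R).toFinset, (Real.sqrt (1 + |v i|^2))⁻¹ * a i n)
              + R ^ (-ρ) * ‖f n - f0‖ ^ 2) := h1
        _ ≤ K' * ((∑ i ∈ (hfin R).toFinset, (Real.sqrt (1 + |v i|^2))⁻¹ * a i n)
              + R ^ (-ρ) * ‖f n - f0‖ ^ 2) := mul_le_mul_of_nonneg_right hKK hnn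
        _ ≤ K' * ((∑ i ∈ (hfin R).toFinset, (Real.sqrt (1 + |v i|^2))⁻¹ * a i n)
              + R ^ (-ρ) * C ^ 2) := by
            exact mul_le_mul_of_nonneg_left (add_le_add le_rfl hterm) hK0
        _ = K' * (∑ i ∈ (hfin R).toFinset, (Real.sqrt (1 + |v i|^2))⁻¹ * a i n)
              + K' * (R ^ (-ρ) * C ^ 2) := by ring
    have h3 := hM n hn
    linarith
  have := lt_of_pow_lt_pow_left₀ 2 (le_of_lt hε) key
  simpa [Real.dist_eq, abs_of_nonneg (hn2 (f n - f0))] using this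
end
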